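/- Suppose char R = 4 and both G and its index-2 subgroup N = ker σ are SLC groups with * the canonical involution on G. Then the symmetric elements (RG)⁺ under the oriented involution ♯ commute. -/

import Mathlib

/-- The oriented involution on the group ring. -/
noncomputable def orientedSharp {R : Type*} [CommRing R] {G : Type*} [Group G]
    (st : G → G) (σ : G →* ℤˣ) (α : MonoidAlgebra R G) : MonoidAlgebra R G :=
  Finsupp.sum α.coeff fun g r => MonoidAlgebra.single (st g) (((σ g : ℤ) : R) * r)

open scoped commutatorElement in
/-- A group is SLC with (unique nonidentity) commutator `s` if `s ≠ 1` is its only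
nonidentity commutator and it has the limited commutativity property. -/
def IsSLC (G : Type*) [Group G] (s : G) : Prop :=
  s ≠ 1 ∧ (∃ g h : G, ⁅g, h⁆ = s) ∧ (∀ g h : G, ⁅g, h⁆ = 1 ∨ ⁅g, h⁆ = s) ∧
    (∀ g h : G, g * h = h * g →
      g ∈ Subgroup.center G ∨ h ∈ Subgroup.center G ∨ g * h ∈ Subgroup.center G)

lemma orientedSharp_apply' {R : Type*} [CommRing R] {G : Type*} [Group G]
    (st : G → G) (σ : G →* ℤˣ) (hst : Function.Involutive st)
    (α : MonoidAlgebra R G) (x : G) :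
    (orientedSharp st σ α).coeff x = ((σ (st x) : ℤ) : R) * α.coeff (st x) := by
  classical
  unfold orientedSharp
  rw [MonoidAlgebra.coeff_finsuppSum, Finsupp.sum_apply]
  have h1 : (α.coeff.sum fun g r => (MonoidAlgebra.single (st g) (((σ g : ℤ) : R) * r)).coeff x)
      = α.coeff.sum fun g r => if g = st x then ((σ g : ℤ) : R) * r else 0 := by
    apply Finsupp.sum_congr
    intro g _
    rw [MonoidAlgebra.coeff_single, Finsupp.single_apply]
    congr 1
    exact propext ⟨fun h => by rw [← h, hst g], fun h => by rw [h, hst x]⟩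
  rw [h1, Finsupp.sum_ite_eq']
  split_ifs with h
  · rfl
  · rw [Finsupp.notMem_support_iff.mp h, mul_zero]

lemma orientedSharp_sub' {R : Type*} [CommRing R] {G : Type*} [Group G]
    (st : G → G) (σ : G →* ℤˣ) (hst : Function.Involutive st)
    (α β : MonoidAlgebra R G) :
    orientedSharp st σ (α - β) = orientedSharp st σ α - orientedSharp st σ β := by
  ext x
  rw [MonoidAlgebra.coeff_sub, Finsupp.sub_apply, orientedSharp_apply' st σ hst, orientedSharp_apply' st σ hst,
    orientedSharp_apply' st σ hst, MonoidAlgebra.coeff_sub, Finsupp.sub_apply, mul_sub]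

lemma four_single_eq {R : Type*} [CommRing R] {G : Type*} [Group G] (A B : G)
    (a1 a2 b1 b2 a1' a2' b1' b2' : R) (ha : a1 + a2 = a1' + a2') (hb : b1 + b2 = b1' + b2') :
    (MonoidAlgebra.single A a1 + MonoidAlgebra.single B b1)
      + (MonoidAlgebra.single B b2 + MonoidAlgebra.single A a2)
    = (MonoidAlgebra.single B b1' + MonoidAlgebra.single A a1')
      + (MonoidAlgebra.single A a2' + MonoidAlgebra.single B b2') := by
  have h1 : (MonoidAlgebra.single A (a1 + a2) : MonoidAlgebra R G)
      = MonoidAlgebra.single A a1 + MonoidAlgebra.single A a2 := MonoidAlgebra.single_add _ _ _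
  have h2 : (MonoidAlgebra.single B (b1 + b2) : MonoidAlgebra R G)
      = MonoidAlgebra.single B b1 + MonoidAlgebra.single B b2 := MonoidAlgebra.single_add _ _ _
  have h3 : (MonoidAlgebra.single A (a1' + a2') : MonoidAlgebra R G)
      = MonoidAlgebra.single A a1' + MonoidAlgebra.single A a2' := MonoidAlgebra.single_add _ _ _
  have h4 : (MonoidAlgebra.single B (b1' + b2') : MonoidAlgebra R G)
      = MonoidAlgebra.single B b1' + MonoidAlgebra.single B b2' := MonoidAlgebra.single_add _ _ _
  have key : MonoidAlgebra.single A (a1 + a2) + MonoidAlgebra.single B (b1 + b2)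
      = MonoidAlgebra.single A (a1' + a2') + MonoidAlgebra.single B (b1' + b2') := by
    rw [ha, hb]
  rw [h1, h2, h3, h4] at key
  calc (MonoidAlgebra.single A a1 + MonoidAlgebra.single B b1)
      + (MonoidAlgebra.single B b2 + MonoidAlgebra.single A a2)
      = (MonoidAlgebra.single A a1 + MonoidAlgebra.single A a2)
        + (MonoidAlgebra.single B b1 + MonoidAlgebra.single B b2) := by abel
    _ = (MonoidAlgebra.single A a1' + MonoidAlgebra.single A a2')
        + (MonoidAlgebra.single B b1' + MonoidAlgebra.single B b2') := key
    _ = _ := by abel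

open scoped commutatorElement in
/-- if `char R = 4` and both `G` and its index-2 subgroup
`N = ker σ` are SLC groups, with `*` the canonical involution on `G`, then
the symmetric elements of `RG` commute. -/
theorem symmetric_commute_case_four {R : Type*} [CommRing R] {G : Type*} [Group G]
    (hchar : ringChar R = 4)
    (s : G) (hG : IsSLC G s)
    (σ : G →* ℤˣ) (hidx : σ.ker.index = 2)
    (hsN : s ∈ σ.ker) (hN : IsSLC σ.ker ⟨s, hsN⟩)
    (st : G → G)
    (hstc : ∀ g : G, g ∈ Subgroup.center G → st g = g)
    (hstnc : ∀ g : G, g ∉ Subgroup.center G → st g = s * g) :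
    ∀ α β : MonoidAlgebra R G,
      orientedSharp st σ α = α → orientedSharp st σ β = β → α * β = β * α := by
  classical
  obtain ⟨hs1, ⟨g0, h0, hgh⟩, hcomm, -⟩ := hG
  -- s is central
  have hconj : ∀ x : G, x * s * x⁻¹ = s := by
    intro x
    have h1 : ⁅x * g0 * x⁻¹, x * h0 * x⁻¹⁆ = x * s * x⁻¹ := by
      rw [← hgh]; simp only [commutatorElement_def]; group
    rcases hcomm (x * g0 * x⁻¹) (x * h0 * x⁻¹) with h | h
    · exfalso; apply hs1
      have h2 := h1.symm.trans h
      have : s = x⁻¹ * 1 * x := by rw [← h2]; group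
      simpa using this
    · exact h1.symm.trans h
  have hsc : ∀ x : G, s * x = x * s := by
    intro x
    calc s * x = (x * s * x⁻¹) * x := by rw [hconj x]
    _ = x * s := by group
  have hscen : s ∈ Subgroup.center G := Subgroup.mem_center_iff.mpr fun x => (hsc x).symm
  -- s has order 2
  have hs2 : s * s = 1 := by
    have hinv : ⁅h0, g0⁆ = s⁻¹ := by rw [← commutatorElement_inv, hgh]
    rcases hcomm h0 g0 with h | h
    · exfalso; apply hs1; rw [hinv] at h; rw [← inv_inv s, h]; simp
    · rw [hinv] at h; nth_rewrite 2 [← h]; simp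
  -- abbreviation for the orientation coefficient
  set c : G → R := fun g => ((σ g : ℤ) : R) with hc
  have hcs : c s = 1 := by
    have : σ s = 1 := hsN
    simp [hc, this]
  have hcmul : ∀ g h : G, c (g * h) = c g * c h := by
    intro g h
    simp only [hc, map_mul, Units.val_mul, Int.cast_mul]
  have hcsq : ∀ g : G, c g * c g = 1 := by
    intro g
    rcases Int.units_eq_one_or (σ g) with h | h <;> simp [hc, h]
  have hcpm : ∀ g : G, c g = 1 ∨ c g = -1 := by
    intro g
    rcases Int.units_eq_one_or (σ g) with h | h
    · left; simp [hc, h]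
    · right; simp [hc, h]
  -- char 4
  have h4 : (4 : R) = 0 := by
    have := (ringChar.spec R 4).mpr (by rw [hchar])
    exact_mod_cast this
  -- s*g is noncentral iff g is
  have hsgnc : ∀ g : G, g ∉ Subgroup.center G → s * g ∉ Subgroup.center G := by
    intro g hg hmem
    exact hg (by
      have : s⁻¹ * (s * g) ∈ Subgroup.center G :=
        mul_mem (inv_mem hscen) hmem
      simpa [← mul_assoc] using this)
  -- st is an involution
  have hstinv : Function.Involutive st := by
    intro g
    by_cases hg : g ∈ Subgroup.center G
    · rw [hstc g hg, hstc g hg]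
    · rw [hstnc g hg, hstnc _ (hsgnc g hg), ← mul_assoc, hs2, one_mul]
  have hstg : ∀ g : G, g ∉ Subgroup.center G → st (s * g) = g := by
    intro g hg
    rw [hstnc _ (hsgnc g hg), ← mul_assoc, hs2, one_mul]
  have hne : ∀ g : G, g ≠ s * g := by
    intro g h
    apply hs1
    have h' : s * g = 1 * g := by rw [← h, one_mul]
    exact mul_right_cancel h'
  have hmuls : ∀ x y : G, x * (s * y) = s * (x * y) := by
    intro x y
    rw [← mul_assoc, ← hsc x, mul_assoc]
  have hsingle : ∀ (a b : G) (r t : R), a * b = b * a →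
      (MonoidAlgebra.single a r : MonoidAlgebra R G) * MonoidAlgebra.single b t
        = MonoidAlgebra.single b t * MonoidAlgebra.single a r := by
    intro a b r t hab
    rw [MonoidAlgebra.single_mul_single, MonoidAlgebra.single_mul_single, hab, mul_comm r t]
  have hcom4 : ∀ x y : G, x * y = y * x → (s * x) * y = y * (s * x) := by
    intro x y hxy
    rw [mul_assoc, hxy, hmuls y x]
  set SymSet : Set (MonoidAlgebra R G) :=
    {a | ∃ g r, g ∈ Subgroup.center G ∧ a = MonoidAlgebra.single g r} ∪
    {a | ∃ g r, g ∉ Subgroup.center G ∧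
        a = MonoidAlgebra.single g r + MonoidAlgebra.single (s * g) (c g * r)} with hSymSet
  -- elements of SymSet pairwise commute
  have hpair : ∀ x ∈ SymSet, ∀ y ∈ SymSet, x * y = y * x := by
    rintro x (⟨g, r, hg, rfl⟩ | ⟨g, r, hg, rfl⟩) y (⟨h, t, hh, rfl⟩ | ⟨h, t, hh, rfl⟩)
    · exact hsingle _ _ _ _ ((Subgroup.mem_center_iff.mp hg h).symm)
    · rw [mul_add, add_mul, hsingle g h r t ((Subgroup.mem_center_iff.mp hg h).symm),
        hsingle g (s * h) r _ ((Subgroup.mem_center_iff.mp hg (s * h)).symm)]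
    · rw [mul_add, add_mul, hsingle g h r t (Subgroup.mem_center_iff.mp hh g),
        hsingle (s * g) h _ t (Subgroup.mem_center_iff.mp hh (s * g))]
    · by_cases hghc : g * h = h * g
      · have a1 : (s * g) * h = h * (s * g) := hcom4 g h hghc
        have a2 : g * (s * h) = (s * h) * g := (hcom4 h g hghc.symm).symm
        have a3 : (s * g) * (s * h) = (s * h) * (s * g) := hcom4 g (s * h) a2
        simp only [mul_add, add_mul]
        rw [hsingle g h r t hghc, hsingle g (s * h) r _ a2, hsingle (s * g) h _ t a1,
          hsingle (s * g) (s * h) _ _ a3]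
        abel
      · have hs' : ⁅g, h⁆ = s := by
          rcases hcomm g h with hcc | hcc
          · exact absurd (commutatorElement_eq_one_iff_mul_comm.mp hcc) hghc
          · exact hcc
        have e1 : g * h = s * (h * g) := by
          rw [← hs']; simp only [commutatorElement_def]; group
        have e2 : h * g = s * (g * h) := by
          calc h * g = (s * s) * (h * g) := by rw [hs2, one_mul]
          _ = s * (s * (h * g)) := by rw [mul_assoc]
          _ = s * (g * h) := by rw [← e1]
        have key : (1 - c g) * (1 - c h) = 0 := by
          rcases hcpm g with h1 | h1
          · rw [h1]; ring
          · rcases hcpm h with h2 | h2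
            · rw [h2]; ring
            · rw [h1, h2]; linear_combination h4
        have k1 : g * (s * h) = s * (g * h) := hmuls g h
        have k2 : (s * g) * h = s * (g * h) := mul_assoc s g h
        have k3 : (s * g) * (s * h) = g * h := by
          rw [mul_assoc, hmuls g h, ← mul_assoc, hs2, one_mul]
        have k4 : h * (s * g) = g * h := by
          rw [hmuls h g, e2, ← mul_assoc, hs2, one_mul]
        have k5 : (s * h) * g = g * h := by
          rw [mul_assoc, e2, ← mul_assoc, hs2, one_mul]
        have k6 : (s * h) * (s * g) = s * (g * h) := by
          rw [mul_assoc, k4]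
        have ha : r * t + c g * r * (c h * t) = c h * t * r + t * (c g * r) := by
          linear_combination r * t * key
        have hb : c g * r * t + r * (c h * t) = t * r + c h * t * (c g * r) := by
          linear_combination (-(r * t)) * key
        simp only [mul_add, add_mul, MonoidAlgebra.single_mul_single, k1, k2, k3, k4, k5, k6, e2]
        exact four_single_eq _ _ _ _ _ _ _ _ _ _ ha hb
  -- pointwise symmetry condition
  have hsymp : ∀ (α : MonoidAlgebra R G), orientedSharp st σ α = α →
      ∀ x : G, c (st x) * α.coeff (st x) = α.coeff x := by
    intro α hα x
    have h := orientedSharp_apply' st σ hstinv α x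
    rw [hα] at h
    exact h.symm
  -- every symmetric element is in the span of SymSet
  have hspan : ∀ (n : ℕ) (α : MonoidAlgebra R G), α.coeff.support.card ≤ n →
      orientedSharp st σ α = α → α ∈ Submodule.span R SymSet := by
    intro n
    induction n with
    | zero =>
      intro α hcard hα
      have : α = 0 := MonoidAlgebra.coeff_eq_zero.mp (Finsupp.card_support_eq_zero.mp (Nat.le_zero.mp hcard))
      rw [this]
      exact Submodule.zero_mem _
    | succ n ih =>
      intro α hcard hα
      by_cases hz : α = 0
      · rw [hz]; exact Submodule.zero_mem _
      obtain ⟨g, hg⟩ := Finsupp.support_nonempty_iff.mpr (mt MonoidAlgebra.coeff_eq_zero.mp hz)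
      by_cases hgc : g ∈ Subgroup.center G
      · -- central case
        set β : MonoidAlgebra R G := MonoidAlgebra.single g (α.coeff g) with hβdef
        have hstgg : st g = g := hstc g hgc
        have hcg : c g * α.coeff g = α.coeff g := by
          have h := hsymp α hα g
          rwa [hstgg] at h
        have hβval : ∀ y : G, β.coeff y = if g = y then α.coeff g else 0 := by
          intro y
          rw [hβdef, MonoidAlgebra.coeff_single, Finsupp.single_apply]
        have hβ : orientedSharp st σ β = β := by
          ext x
          rw [orientedSharp_apply' st σ hstinv]
          show c (st x) * β.coeff (st x) = β.coeff x
          rw [hβval, hβval]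
          by_cases hx : x = g
          · rw [hx, hstgg, if_pos rfl]
            exact hcg
          · have hng : ¬ (g = st x) := by
              intro hh
              apply hx
              have h3 := hstinv x
              rw [← hh, hstgg] at h3
              exact h3.symm
            rw [if_neg hng, if_neg (fun hh : g = x => hx hh.symm), mul_zero]
        have hsub1 : orientedSharp st σ (α - β) = α - β := by
          rw [orientedSharp_sub' st σ hstinv, hα, hβ]
        have hsupp : (α - β).coeff.support ⊆ α.coeff.support.erase g := by
          intro x hx
          rw [Finsupp.mem_support_iff, MonoidAlgebra.coeff_sub, Finsupp.sub_apply] at hx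
          have hxg : x ≠ g := by
            intro hxg
            apply hx
            rw [hxg, hβval, if_pos rfl, sub_self]
          rw [Finset.mem_erase, Finsupp.mem_support_iff]
          refine ⟨hxg, fun hax => hx ?_⟩
          rw [hax, hβval, if_neg (fun hh : g = x => hxg hh.symm), sub_zero]
        have hcard' : (α - β).coeff.support.card ≤ n := by
          have h1 := Finset.card_le_card hsupp
          rw [Finset.card_erase_of_mem hg] at h1
          omega
        have hmem : β ∈ SymSet := Or.inl ⟨g, α.coeff g, hgc, rfl⟩
        have hrec : α = (α - β) + β := by abel
        rw [hrec]
        exact Submodule.add_mem _ (ih _ hcard' hsub1) (Submodule.subset_span hmem)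
      · -- noncentral case
        have hstgg : st g = s * g := hstnc g hgc
        have hstsg : st (s * g) = g := hstg g hgc
        have hcg : c g * α.coeff g = α.coeff (s * g) := by
          have h := hsymp α hα (s * g)
          rwa [hstsg] at h
        have hcsg : c (s * g) = c g := by rw [hcmul, hcs, one_mul]
        set β : MonoidAlgebra R G := MonoidAlgebra.single g (α.coeff g)
            + MonoidAlgebra.single (s * g) (c g * α.coeff g) with hβdef
        have hβval : ∀ y : G,
            β.coeff y = (if g = y then α.coeff g else 0) + (if s * g = y then c g * α.coeff g else 0) := by
          intro y
          rw [hβdef, MonoidAlgebra.coeff_add, Finsupp.add_apply, MonoidAlgebra.coeff_single, Finsupp.single_apply,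
            MonoidAlgebra.coeff_single, Finsupp.single_apply]
        have hβ : orientedSharp st σ β = β := by
          ext x
          rw [orientedSharp_apply' st σ hstinv]
          show c (st x) * β.coeff (st x) = β.coeff x
          rw [hβval, hβval]
          by_cases hx1 : x = g
          · rw [hx1, hstgg, hcsg, if_neg (fun hh : g = s * g => hne g hh),
              if_pos rfl, if_pos rfl, if_neg (fun hh : s * g = g => hne g hh.symm),
              zero_add, add_zero, ← mul_assoc, hcsq g, one_mul]
          · by_cases hx2 : x = s * g
            · rw [hx2, hstsg, if_pos rfl,
                if_neg (fun hh : s * g = g => hne g hh.symm),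
                if_neg (fun hh : g = s * g => hne g hh), if_pos rfl, add_zero, zero_add]
            · have hng : ¬ (g = st x) := by
                intro hh
                apply hx2
                have h3 := hstinv x
                rw [← hh, hstgg] at h3
                exact h3.symm
              have hnsg : ¬ (s * g = st x) := by
                intro hh
                apply hx1
                have h3 := hstinv x
                rw [← hh, hstsg] at h3
                exact h3.symm
              rw [if_neg hng, if_neg hnsg,
                if_neg (fun hh : g = x => hx1 hh.symm),
                if_neg (fun hh : s * g = x => hx2 hh.symm), add_zero, mul_zero]
        have hsub1 : orientedSharp st σ (α - β) = α - β := by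
          rw [orientedSharp_sub' st σ hstinv, hα, hβ]
        have hsupp : (α - β).coeff.support ⊆ α.coeff.support.erase g := by
          intro x hx
          rw [Finsupp.mem_support_iff, MonoidAlgebra.coeff_sub, Finsupp.sub_apply] at hx
          have hxg : x ≠ g := by
            intro hxg
            apply hx
            rw [hxg, hβval, if_pos rfl, if_neg (fun hh : s * g = g => hne g hh.symm),
              add_zero, sub_self]
          rw [Finset.mem_erase, Finsupp.mem_support_iff]
          refine ⟨hxg, fun hax => hx ?_⟩
          by_cases hx2 : x = s * g
          · rw [hx2, hβval, if_neg (fun hh : g = s * g => hne g hh), if_pos rfl, zero_add,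
              ← hcg, sub_self]
          · rw [hax, hβval, if_neg (fun hh : g = x => hxg hh.symm),
              if_neg (fun hh : s * g = x => hx2 hh.symm), add_zero, sub_zero]
        have hcard' : (α - β).coeff.support.card ≤ n := by
          have h1 := Finset.card_le_card hsupp
          rw [Finset.card_erase_of_mem hg] at h1
          omega
        have hmem : β ∈ SymSet := Or.inr ⟨g, α.coeff g, hgc, rfl⟩
        have hrec : α = (α - β) + β := by abel
        rw [hrec]
        exact Submodule.add_mem _ (ih _ hcard' hsub1) (Submodule.subset_span hmem)
  -- conclude
  intro α β hα hβ
  have hA := hspan α.coeff.support.card α le_rfl hα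
  have hB := hspan β.coeff.support.card β le_rfl hβ
  have step1 : ∀ x ∈ SymSet, x * β = β * x := by
    intro x hx
    refine Submodule.span_induction (p := fun y _ => x * y = y * x)
      (fun y hy => hpair x hx y hy) (by simp) ?_ ?_ hB
    · intro y z _ _ hy hz
      rw [mul_add, add_mul, hy, hz]
    · intro a y _ hy
      rw [mul_smul_comm, smul_mul_assoc, hy]
  refine Submodule.span_induction (p := fun x _ => x * β = β * x)
    (fun x hx => step1 x hx) (by simp) ?_ ?_ hA
  · intro y z _ _ hy hz
    rw [add_mul, mul_add, hy, hz]
  · intro a y _ hy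
    rw [smul_mul_assoc, mul_smul_comm, hy]
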